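/- In SPC extended with the unary operator ⌊·⌋ with the rules play and pause (the latter non-smooth), weak bisimilarity fails to be a congruence for ⌊·⌋: for fixed distinct visible actions a, b ∈ Δ, a.0 + τ.b.0 ≈ a.0 + τ.b.0 + b.0, but ⌊a.0 + τ.b.0⌋ ≉ ⌊a.0 + τ.b.0 + b.0⌋. -/
import Mathlib


/-- Labels `Δτ = Δ ∪ Δ̄ ∪ {τ}`: actions, coactions and the internal action `τ`. -/
inductive Lab (Δ : Type) : Type
  | act : Δ → Lab Δ
  | coact : Δ → Lab Δ
  | tau : Lab Δ

/-- Processes of SPC extended with the unary operator `⌊·⌋`: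
`p ::= 0 | δ.p | p ∥ q | p + q | ⌊p⌋`. -/
inductive FProc (Δ : Type) : Type
  | nil : FProc Δ
  | pre : Lab Δ → FProc Δ → FProc Δ
  | par : FProc Δ → FProc Δ → FProc Δ
  | choice : FProc Δ → FProc Δ → FProc Δ
  | floor : FProc Δ → FProc Δ

/-- `p ⇒ q`: the reflexive–transitive closure of `→τ`, for an arbitrary
labelled transition relation `step`. -/
def TauStar {Δ P : Type} (step : P → Lab Δ → P → Prop) : P → P → Prop :=
  Relation.ReflTransGen (fun p q => step p Lab.tau q)

/-- The weak transition relation `p ⇒δ q`: for `δ = τ` it is `p ⇒ q`,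
otherwise `p ⇒ p' →δ q' ⇒ q`. -/
def WStep {Δ P : Type} (step : P → Lab Δ → P → Prop) (p : P) (δ : Lab Δ) (q : P) : Prop :=
  (δ = Lab.tau ∧ TauStar step p q) ∨
  (δ ≠ Lab.tau ∧ ∃ p' q', TauStar step p p' ∧ step p' δ q' ∧ TauStar step q' q)

/-- A relation `R` is a weak bisimulation if every step from one side is matched
by a weak step from the other side, ending in `R`-related states. -/
def IsWeakBisim {Δ P : Type} (step : P → Lab Δ → P → Prop) (R : P → P → Prop) : Prop :=
  ∀ p q, R p q →
    (∀ δ p', step p δ p' → ∃ q', WStep step q δ q' ∧ R p' q') ∧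
    (∀ δ q', step q δ q' → ∃ p', WStep step p δ p' ∧ R p' q')

/-- Weak bisimilarity `p ≈ q`: `p` and `q` are related by some weak bisimulation. -/
def WBisim {Δ P : Type} (step : P → Lab Δ → P → Prop) (p q : P) : Prop :=
  ∃ R, IsWeakBisim step R ∧ R p q

/-- The LTS of SPC extended with `⌊·⌋` subject to the rules
(play): `p →δ p'` implies `⌊p⌋ →δ ⌊p'⌋`, and the non-smooth rule
(pause): `p →δ p'` implies `⌊p⌋ →δ ⌊p⌋`. -/
inductive FStep {Δ : Type} : FProc Δ → Lab Δ → FProc Δ → Prop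
  | pre (δ : Lab Δ) (p : FProc Δ) : FStep (.pre δ p) δ p
  | choiceL {p p' q : FProc Δ} {δ : Lab Δ} : FStep p δ p' → FStep (.choice p q) δ p'
  | choiceR {p q q' : FProc Δ} {δ : Lab Δ} : FStep q δ q' → FStep (.choice p q) δ q'
  | parL {p p' q : FProc Δ} {δ : Lab Δ} : FStep p δ p' → FStep (.par p q) δ (.par p' q)
  | parR {p q q' : FProc Δ} {δ : Lab Δ} : FStep q δ q' → FStep (.par p q) δ (.par p q')
  | syn {p p' q q' : FProc Δ} {d : Δ} :
      FStep p (.act d) p' → FStep q (.coact d) q' → FStep (.par p q) .tau (.par p' q')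
  | play {p p' : FProc Δ} {δ : Lab Δ} : FStep p δ p' → FStep (.floor p) δ (.floor p')
  | pause {p p' : FProc Δ} {δ : Lab Δ} : FStep p δ p' → FStep (.floor p) δ (.floor p)

section Helpers

variable {Δ : Type}

lemma wstep_single {p q : FProc Δ} {δ : Lab Δ} (h : FStep p δ q) :
    WStep FStep p δ q := by
  by_cases hδ : δ = Lab.tau
  · subst hδ; exact Or.inl ⟨rfl, Relation.ReflTransGen.single h⟩
  · exact Or.inr ⟨hδ, p, q, Relation.ReflTransGen.refl, h, Relation.ReflTransGen.refl⟩

lemma step_nil {δ : Lab Δ} {r : FProc Δ} (h : FStep FProc.nil δ r) : False := by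
  cases h

lemma step_pre {δ δ' : Lab Δ} {p r : FProc Δ} (h : FStep (.pre δ p) δ' r) :
    δ' = δ ∧ r = p := by
  cases h; exact ⟨rfl, rfl⟩

variable (a b : Δ)

local notation "P" => FProc.choice (FProc.pre (Lab.act a) FProc.nil)
    (FProc.pre Lab.tau (FProc.pre (Lab.act b) FProc.nil))
local notation "B0" => FProc.pre (Lab.act b) (FProc.nil : FProc Δ)
local notation "Q" => FProc.choice P B0

lemma step_P {δ : Lab Δ} {r : FProc Δ} (h : FStep P δ r) :
    (δ = .act a ∧ r = .nil) ∨ (δ = .tau ∧ r = B0) := by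
  cases h with
  | choiceL h => obtain ⟨h1, h2⟩ := step_pre h; exact Or.inl ⟨h1, h2⟩
  | choiceR h => obtain ⟨h1, h2⟩ := step_pre h; exact Or.inr ⟨h1, h2⟩

lemma step_Q {δ : Lab Δ} {r : FProc Δ} (h : FStep Q δ r) :
    (δ = .act a ∧ r = .nil) ∨ (δ = .tau ∧ r = B0) ∨ (δ = .act b ∧ r = .nil) := by
  cases h with
  | choiceL h => exact (step_P a b h).imp id Or.inl
  | choiceR h => obtain ⟨h1, h2⟩ := step_pre h; exact Or.inr (Or.inr ⟨h1, h2⟩)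

lemma step_floor {p : FProc Δ} {δ : Lab Δ} {r : FProc Δ} (h : FStep (.floor p) δ r) :
    ∃ p', FStep p δ p' ∧ (r = .floor p' ∨ r = .floor p) := by
  cases h with
  | play h => exact ⟨_, h, Or.inl rfl⟩
  | pause h => exact ⟨_, h, Or.inr rfl⟩

lemma taustar_floorP {x : FProc Δ} (h : TauStar FStep (FProc.floor P) x) :
    x = .floor P ∨ x = .floor B0 := by
  induction h with
  | refl => exact Or.inl rfl
  | tail _ hstep ih =>
    rcases ih with rfl | rfl
    · obtain ⟨p', hp', _ | _⟩ := step_floor hstep <;> subst_vars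
      · rcases step_P a b hp' with ⟨h1, h2⟩ | ⟨h1, h2⟩
        · cases h1
        · exact Or.inr (by rw [h2])
      · exact Or.inl rfl
    · obtain ⟨p', hp', _⟩ := step_floor hstep
      obtain ⟨h1, _⟩ := step_pre hp'; cases h1

lemma taustar_floorB0 {x : FProc Δ} (h : TauStar FStep (FProc.floor B0) x) :
    x = .floor B0 := by
  induction h with
  | refl => rfl
  | tail _ hstep ih =>
    subst ih
    obtain ⟨p', hp', _⟩ := step_floor hstep
    obtain ⟨h1, _⟩ := step_pre hp'; cases h1

lemma taustar_floorNil {x : FProc Δ} (h : TauStar FStep (FProc.floor (FProc.nil : FProc Δ)) x) :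
    x = .floor .nil := by
  induction h with
  | refl => rfl
  | tail _ hstep ih =>
    subst ih
    obtain ⟨p', hp', _⟩ := step_floor hstep
    exact absurd hp' (fun h => step_nil h)

end Helpers

/-- With rules play and pause (for distinct visible actions `a`, `b`), weak
bisimilarity fails to be a congruence for `⌊·⌋`:
`a.0 + τ.b.0 ≈ a.0 + τ.b.0 + b.0` but `⌊a.0 + τ.b.0⌋ ≉ ⌊a.0 + τ.b.0 + b.0⌋`. -/


theorem floor_pause_not_congruence (Δ : Type) (a b : Δ) (hab : a ≠ b) :
    WBisim FStep
      (FProc.choice (FProc.pre (Lab.act a) FProc.nil)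
        (FProc.pre Lab.tau (FProc.pre (Lab.act b) FProc.nil)))
      (FProc.choice
        (FProc.choice (FProc.pre (Lab.act a) FProc.nil)
          (FProc.pre Lab.tau (FProc.pre (Lab.act b) FProc.nil)))
        (FProc.pre (Lab.act b) FProc.nil)) ∧
    ¬ WBisim FStep
      (FProc.floor (FProc.choice (FProc.pre (Lab.act a) FProc.nil)
        (FProc.pre Lab.tau (FProc.pre (Lab.act b) FProc.nil))))
      (FProc.floor (FProc.choice
        (FProc.choice (FProc.pre (Lab.act a) FProc.nil)
          (FProc.pre Lab.tau (FProc.pre (Lab.act b) FProc.nil)))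
        (FProc.pre (Lab.act b) FProc.nil))) := by
  classical
  set P : FProc Δ := FProc.choice (FProc.pre (Lab.act a) FProc.nil)
      (FProc.pre Lab.tau (FProc.pre (Lab.act b) FProc.nil)) with hPdef
  set B0 : FProc Δ := FProc.pre (Lab.act b) FProc.nil with hB0def
  set Q : FProc Δ := FProc.choice P B0 with hQdef
  have hab' : Lab.act a ≠ (Lab.act b : Lab Δ) := fun h => hab (by cases h; rfl)
  constructor
  · -- the two processes are weakly bisimilar
    refine ⟨fun x y => (x = P ∧ y = Q) ∨ x = y, ?_, Or.inl ⟨rfl, rfl⟩⟩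
    rintro p q (⟨rfl, rfl⟩ | rfl)
    · constructor
      · intro δ p' h
        rcases step_P a b h with ⟨rfl, rfl⟩ | ⟨rfl, rfl⟩
        · exact ⟨.nil, wstep_single (.choiceL (.choiceL (.pre _ _))), Or.inr rfl⟩
        · exact ⟨B0, wstep_single (.choiceL (.choiceR (.pre _ _))), Or.inr rfl⟩
      · intro δ q' h
        rcases step_Q a b h with ⟨rfl, rfl⟩ | ⟨rfl, rfl⟩ | ⟨rfl, rfl⟩
        · exact ⟨.nil, wstep_single (.choiceL (.pre _ _)), Or.inr rfl⟩
        · exact ⟨B0, wstep_single (.choiceR (.pre _ _)), Or.inr rfl⟩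
        · have hne : (Lab.act b : Lab Δ) ≠ Lab.tau := fun h => by cases h
          have hsingle : TauStar FStep P B0 :=
            Relation.ReflTransGen.single (FStep.choiceR (FStep.pre Lab.tau B0))
          have hpre : FStep B0 (Lab.act b) FProc.nil := FStep.pre (Lab.act b) FProc.nil
          exact ⟨FProc.nil, Or.inr ⟨hne, B0, FProc.nil, hsingle, hpre,
            Relation.ReflTransGen.refl⟩, Or.inr rfl⟩
    · exact ⟨fun δ p' h => ⟨p', wstep_single h, Or.inr rfl⟩,
        fun δ q' h => ⟨q', wstep_single h, Or.inr rfl⟩⟩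
  · -- the floored processes are not weakly bisimilar
    rintro ⟨R, hR, hPQ⟩
    -- ⌊Q⌋ does b (pause); ⌊P⌋ must match weakly
    have hQb : FStep (FProc.floor Q) (Lab.act b) (FProc.floor Q) :=
      .pause (.choiceR (.pre _ _))
    obtain ⟨r', hw, hr'⟩ := (hR _ _ hPQ).2 _ _ hQb
    rcases hw with ⟨habs, -⟩ | ⟨-, p', q', ht1, hs, ht2⟩
    · cases habs
    have hr'cases : r' = FProc.floor FProc.nil ∨ r' = FProc.floor B0 := by
      rcases taustar_floorP a b ht1 with rfl | rfl
      · obtain ⟨p'', hp'', -⟩ := step_floor hs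
        rcases step_P a b hp'' with ⟨h1, -⟩ | ⟨h1, -⟩
        · exact absurd h1.symm hab'
        · cases h1
      · obtain ⟨p'', hp'', hq⟩ := step_floor hs
        obtain ⟨-, rfl⟩ := step_pre hp''
        rcases hq with rfl | rfl
        · exact Or.inl (taustar_floorNil ht2)
        · exact Or.inr (taustar_floorB0 b ht2)
    -- ⌊Q⌋ does a (pause); r' must match weakly, but cannot
    have hQa : FStep (FProc.floor Q) (Lab.act a) (FProc.floor Q) :=
      .pause (.choiceL (.choiceL (.pre _ _)))
    obtain ⟨x, hwx, -⟩ := (hR _ _ hr').2 _ _ hQa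
    rcases hwx with ⟨habs, -⟩ | ⟨-, u, v, ht1', hs', -⟩
    · cases habs
    rcases hr'cases with rfl | rfl
    · rw [taustar_floorNil ht1'] at hs'
      obtain ⟨p'', hp'', -⟩ := step_floor hs'
      exact step_nil hp''
    · rw [taustar_floorB0 b ht1'] at hs'
      obtain ⟨p'', hp'', -⟩ := step_floor hs'
      obtain ⟨h1, -⟩ := step_pre hp''
      exact hab' h1
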